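/- Let R = 𝔽₁ × ⋯ × 𝔽_t be a finite product of finite fields, and let A ∈ Mat_{δ×δ}(R), B ∈ Mat_{δ×k}(R), C ∈ Mat_{(n−k)×δ}(R), D ∈ Mat_{(n−k)×k}(R) be matrices such that the controllability matrix Φ_δ(A,B) = (B, AB, …, A^{δ−1}B) is surjective and the observability matrix Ω_δ(A,C) (the (δ(n−k))×δ matrix with block rows C, CA, …, CA^{δ−1}) is injective. Define 𝔠 := {v(z) = (y(z), u(z)) ∈ R[z]^{n−k} × R[z]^k : ∃ x(z) ∈ R[z]^δ with z·x(z) = A x(z) + B u(z) and y(z) = C x(z) + D u(z)} ⊆ R[z]^n. Then R[z]^n/𝔠 is flat as an R[z]-module, i.e. the family of convolutional codes 𝔠 defined by the input/state/output representation (A,B,C,D) is observable. -/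

import Mathlib

open Matrix Polynomial

/-- The controllability matrix `Φ_δ(A,B) = (B, AB, …, A^{δ-1}B)`. -/
def ctrbMatrix {S : Type*} [CommRing S] {δ k : ℕ}
    (A : Matrix (Fin δ) (Fin δ) S) (B : Matrix (Fin δ) (Fin k) S) :
    Matrix (Fin δ) (Fin δ × Fin k) S :=
  Matrix.of fun i p => (A ^ (p.1 : ℕ) * B) i p.2

/-- The observability matrix `Ω_δ(A,C)`, with block rows `C, CA, …, CA^{δ-1}`. -/
def obsvMatrix {S : Type*} [CommRing S] {δ m : ℕ}
    (A : Matrix (Fin δ) (Fin δ) S) (C : Matrix (Fin m) (Fin δ) S) :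
    Matrix (Fin δ × Fin m) (Fin δ) S :=
  Matrix.of fun p q => (C * A ^ (p.1 : ℕ)) p.2 q

/-! ### Auxiliary material -/

section Code

variable {F : Type*} [CommRing F] {k m δ : ℕ}

/-- The code as a set. -/
def codeSet (A : Matrix (Fin δ) (Fin δ) F) (B : Matrix (Fin δ) (Fin k) F)
    (C : Matrix (Fin m) (Fin δ) F) (D : Matrix (Fin m) (Fin k) F) :
    Set ((Fin m ⊕ Fin k) → Polynomial F) :=
  {v | ∃ x : Fin δ → Polynomial F,
      (Polynomial.X : Polynomial F) • x =
          (A.map Polynomial.C).mulVec x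
            + (B.map Polynomial.C).mulVec (fun i => v (Sum.inr i)) ∧
      (fun i => v (Sum.inl i)) =
          (C.map Polynomial.C).mulVec x
            + (D.map Polynomial.C).mulVec (fun i => v (Sum.inr i))}

/-- The code as a submodule. -/
noncomputable def codeSubmodule (A : Matrix (Fin δ) (Fin δ) F) (B : Matrix (Fin δ) (Fin k) F)
    (C : Matrix (Fin m) (Fin δ) F) (D : Matrix (Fin m) (Fin k) F) :
    Submodule (Polynomial F) ((Fin m ⊕ Fin k) → Polynomial F) where
  carrier := codeSet A B C D
  add_mem' := by
    rintro v w ⟨x, hx1, hx2⟩ ⟨x', hx1', hx2'⟩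
    refine ⟨x + x', ?_, ?_⟩
    · have : (fun i => (v + w) (Sum.inr i))
          = (fun i => v (Sum.inr i)) + (fun i => w (Sum.inr i)) := rfl
      rw [this, smul_add, hx1, hx1', Matrix.mulVec_add, Matrix.mulVec_add]
      abel
    · have h2 : (fun i => (v + w) (Sum.inl i))
          = (fun i => v (Sum.inl i)) + (fun i => w (Sum.inl i)) := rfl
      have h3 : (fun i => (v + w) (Sum.inr i))
          = (fun i => v (Sum.inr i)) + (fun i => w (Sum.inr i)) := rfl
      rw [h2, h3, hx2, hx2', Matrix.mulVec_add, Matrix.mulVec_add]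
      abel
  zero_mem' := by
    refine ⟨0, ?_, ?_⟩
    · show X • (0 : Fin δ → Polynomial F) = _ *ᵥ 0 + _ *ᵥ (0 : Fin k → Polynomial F)
      simp [Matrix.mulVec_zero]
    · show (0 : Fin m → Polynomial F) = _ *ᵥ 0 + _ *ᵥ (0 : Fin k → Polynomial F)
      simp [Matrix.mulVec_zero]
  smul_mem' := by
    rintro q v ⟨x, hx1, hx2⟩
    refine ⟨q • x, ?_, ?_⟩
    · have : (fun i => (q • v) (Sum.inr i)) = q • (fun i => v (Sum.inr i)) := rfl
      rw [this, Matrix.mulVec_smul, Matrix.mulVec_smul, smul_comm, hx1, smul_add]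
    · have h2 : (fun i => (q • v) (Sum.inl i)) = q • (fun i => v (Sum.inl i)) := rfl
      have h3 : (fun i => (q • v) (Sum.inr i)) = q • (fun i => v (Sum.inr i)) := rfl
      rw [h2, h3, Matrix.mulVec_smul, Matrix.mulVec_smul, hx2, smul_add]

lemma mem_codeSubmodule {A : Matrix (Fin δ) (Fin δ) F} {B : Matrix (Fin δ) (Fin k) F}
    {C : Matrix (Fin m) (Fin δ) F} {D : Matrix (Fin m) (Fin k) F}
    {v : (Fin m ⊕ Fin k) → Polynomial F} :
    v ∈ codeSubmodule A B C D ↔ v ∈ codeSet A B C D := Iff.rfl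

end Code

section ObsvAux

lemma obsvMatrix_map {δ m : ℕ} {F G : Type*} [CommRing F] [CommRing G] (f : F →+* G)
    (A : Matrix (Fin δ) (Fin δ) F) (C : Matrix (Fin m) (Fin δ) F) :
    obsvMatrix (A.map f) (C.map f) = (obsvMatrix A C).map f := by
  funext p q
  show ((C.map f) * (A.map f) ^ (p.1 : ℕ)) p.2 q = f ((C * A ^ (p.1 : ℕ)) p.2 q)
  have h1 : (A.map f) ^ (p.1 : ℕ) = (A ^ (p.1 : ℕ)).map f := by
    rw [← RingHom.mapMatrix_apply, ← RingHom.mapMatrix_apply, ← map_pow]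
  rw [h1, ← Matrix.map_mul]
  rfl

lemma obsvMatrix_mulVec_apply {δ m : ℕ} {F : Type*} [CommRing F]
    (A : Matrix (Fin δ) (Fin δ) F) (C : Matrix (Fin m) (Fin δ) F)
    (x : Fin δ → F) (p : Fin δ × Fin m) :
    (obsvMatrix A C).mulVec x p = ((C * A ^ (p.1 : ℕ)).mulVec x) p.2 := rfl

end ObsvAux

section Torsion

lemma smul_cancel {F : Type*} [Field F] {q : Polynomial F} (hq : q ≠ 0) {ι : Type*}
    {a b : ι → Polynomial F} (h : q • a = q • b) : a = b :=
  funext fun i => mul_left_cancel₀ hq (congrFun h i)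

lemma smul_mem_codeSet {F : Type*} [Field F] {k m δ : ℕ}
    (A : Matrix (Fin δ) (Fin δ) F) (B : Matrix (Fin δ) (Fin k) F)
    (C : Matrix (Fin m) (Fin δ) F) (D : Matrix (Fin m) (Fin k) F)
    (hobs : Function.Injective (obsvMatrix A C).mulVecLin)
    {q : Polynomial F} (hq : q ≠ 0) {v : (Fin m ⊕ Fin k) → Polynomial F}
    (hv : q • v ∈ codeSet A B C D) : v ∈ codeSet A B C D := by
  obtain ⟨x, hx1, hx2⟩ := hv
  have hu : (fun i => (q • v) (Sum.inr i)) = q • (fun i => v (Sum.inr i)) := rfl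
  have hy : (fun i => (q • v) (Sum.inl i)) = q • (fun i => v (Sum.inl i)) := rfl
  rw [hu] at hx1 hx2
  rw [hy] at hx2
  set u := fun i => v (Sum.inr i) with hudef
  set y := fun i => v (Sum.inl i) with hydef
  rw [Matrix.mulVec_smul] at hx1 hx2
  have hAx : (A.map Polynomial.C).mulVec x
      = (X : Polynomial F) • x - q • ((B.map Polynomial.C).mulVec u) := by
    rw [hx1]; abel
  have hCx : (C.map Polynomial.C).mulVec x
      = q • (y - (D.map Polynomial.C).mulVec u) := by
    rw [smul_sub]
    exact eq_sub_iff_add_eq.mpr hx2.symm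
  have key : ∀ l : ℕ, ∃ w : Fin m → Polynomial F,
      ((C.map Polynomial.C) * (A.map Polynomial.C) ^ l).mulVec x = q • w := by
    intro l
    induction l with
    | zero =>
      refine ⟨y - (D.map Polynomial.C).mulVec u, ?_⟩
      rw [pow_zero, Matrix.mul_one]; exact hCx
    | succ l ih =>
      obtain ⟨w, hw⟩ := ih
      refine ⟨(X : Polynomial F) • w - ((C.map Polynomial.C) * (A.map Polynomial.C) ^ l
          * (B.map Polynomial.C)).mulVec u, ?_⟩
      rw [pow_succ, ← Matrix.mul_assoc, ← Matrix.mulVec_mulVec, hAx, Matrix.mulVec_sub,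
        Matrix.mulVec_smul, Matrix.mulVec_smul, hw, Matrix.mulVec_mulVec,
        smul_comm (X : Polynomial F) q w, ← smul_sub]
  have hWex : ∃ W : (Fin δ × Fin m) → Polynomial F,
      (obsvMatrix (A.map Polynomial.C) (C.map Polynomial.C)).mulVec x = q • W := by
    choose w hw using key
    refine ⟨fun p => w (p.1 : ℕ) p.2, ?_⟩
    funext p
    rw [obsvMatrix_mulVec_apply, hw (p.1 : ℕ)]
    rfl
  obtain ⟨W, hW⟩ := hWex
  obtain ⟨g, hg⟩ := (obsvMatrix A C).mulVecLin.exists_leftInverse_of_injective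
    (LinearMap.ker_eq_bot.mpr hobs)
  set L := LinearMap.toMatrix' g with hLdef
  have hL : L * obsvMatrix A C = 1 := by
    have h := congrArg LinearMap.toMatrix' hg
    rwa [LinearMap.toMatrix'_comp, ← Matrix.toLin'_apply', LinearMap.toMatrix'_toLin',
      LinearMap.toMatrix'_id] at h
  have hL' : (L.map Polynomial.C) * obsvMatrix (A.map Polynomial.C) (C.map Polynomial.C)
      = 1 := by
    rw [obsvMatrix_map, ← Matrix.map_mul, hL, Matrix.map_one _ (map_zero _) (map_one _)]
  have hx : x = q • ((L.map Polynomial.C).mulVec W) := by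
    calc x = ((L.map Polynomial.C)
          * obsvMatrix (A.map Polynomial.C) (C.map Polynomial.C)).mulVec x := by
          rw [hL', Matrix.one_mulVec]
    _ = (L.map Polynomial.C).mulVec
          ((obsvMatrix (A.map Polynomial.C) (C.map Polynomial.C)).mulVec x) :=
          (Matrix.mulVec_mulVec _ _ _).symm
    _ = q • ((L.map Polynomial.C).mulVec W) := by rw [hW, Matrix.mulVec_smul]
  refine ⟨(L.map Polynomial.C).mulVec W, ?_, ?_⟩
  · rw [hx, smul_comm (X : Polynomial F) q, Matrix.mulVec_smul] at hx1
    exact smul_cancel hq (by rw [smul_add]; exact hx1)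
  · show y = _
    rw [hx, Matrix.mulVec_smul] at hx2
    exact smul_cancel hq (by rw [smul_add]; exact hx2)

lemma flat_quotient_code {F : Type*} [Field F] {k m δ : ℕ}
    (A : Matrix (Fin δ) (Fin δ) F) (B : Matrix (Fin δ) (Fin k) F)
    (C : Matrix (Fin m) (Fin δ) F) (D : Matrix (Fin m) (Fin k) F)
    (hobs : Function.Injective (obsvMatrix A C).mulVecLin) :
    Module.Flat (Polynomial F)
      (((Fin m ⊕ Fin k) → Polynomial F) ⧸ codeSubmodule A B C D) := by
  haveI : NoZeroSMulDivisors (Polynomial F)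
      (((Fin m ⊕ Fin k) → Polynomial F) ⧸ codeSubmodule A B C D) := by
    refine ⟨fun {c x} h => ?_⟩
    by_cases hc : c = 0
    · exact Or.inl hc
    · refine Or.inr ?_
      obtain ⟨v, rfl⟩ := Submodule.Quotient.mk_surjective _ x
      rw [← Submodule.Quotient.mk_smul, Submodule.Quotient.mk_eq_zero] at h
      rw [Submodule.Quotient.mk_eq_zero]
      exact smul_mem_codeSet A B C D hobs hc h
  haveI : Module.Finite (Polynomial F)
      (((Fin m ⊕ Fin k) → Polynomial F) ⧸ codeSubmodule A B C D) :=
    Module.Finite.of_surjective (codeSubmodule A B C D).mkQ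
      (Submodule.Quotient.mk_surjective _)
  infer_instance

end Torsion

section Combine

variable {t : ℕ} {𝔽 : Fin t → Type*} [∀ j, CommRing (𝔽 j)]

/-- Combine a family of polynomials over the `𝔽 j` into one polynomial over `∀ j, 𝔽 j`. -/
noncomputable def combine (g : ∀ j, Polynomial (𝔽 j)) : Polynomial (∀ j, 𝔽 j) :=
  ∑ j, (g j).sum fun d a => Polynomial.monomial d (Pi.single j a)

lemma coeff_combine (g : ∀ j, Polynomial (𝔽 j)) (d : ℕ) (j : Fin t) :
    (combine g).coeff d j = (g j).coeff d := by
  classical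
  have h1 : ∀ j' : Fin t,
      ((g j').sum fun e a => Polynomial.monomial e (Pi.single j' a)).coeff d
        = Pi.single (M := fun j => 𝔽 j) j' ((g j').coeff d) := by
    intro j'
    rw [Polynomial.sum, Polynomial.finset_sum_coeff]
    simp only [Polynomial.coeff_monomial]
    rw [Finset.sum_ite_eq' (g j').support d (fun e => Pi.single j' ((g j').coeff e))]
    by_cases hd : d ∈ (g j').support
    · rw [if_pos hd]
    · rw [if_neg hd, Polynomial.notMem_support_iff.mp hd, Pi.single_zero]
  rw [combine, Polynomial.finset_sum_coeff]
  have h2 : (∑ j', ((g j').sum fun e a => Polynomial.monomial e (Pi.single j' a)).coeff d)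
      = ∑ j', Pi.single (M := fun j => 𝔽 j) j' ((g j').coeff d) :=
    Finset.sum_congr rfl fun j' _ => h1 j'
  rw [h2, Finset.sum_apply]
  simp [Pi.single_apply]

lemma map_combine (g : ∀ j, Polynomial (𝔽 j)) (j : Fin t) :
    (combine g).map (Pi.evalRingHom 𝔽 j) = g j := by
  ext d
  rw [Polynomial.coeff_map]
  exact coeff_combine g d j

lemma pi_map_injective {p q : Polynomial (∀ j, 𝔽 j)}
    (h : ∀ j, p.map (Pi.evalRingHom 𝔽 j) = q.map (Pi.evalRingHom 𝔽 j)) : p = q := by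
  refine Polynomial.ext fun d => funext fun j => ?_
  have := congrArg (fun r => r.coeff d) (h j)
  simpa [Polynomial.coeff_map] using this

end Combine

section PiCode

variable {t k m δ : ℕ} {𝔽 : Fin t → Type*} [∀ j, CommRing (𝔽 j)]

/-- Componentwise projection of polynomials over a product ring. -/
noncomputable def pij (𝔽 : Fin t → Type*) [∀ j, CommRing (𝔽 j)] (j : Fin t) :
    Polynomial (∀ j, 𝔽 j) →+* Polynomial (𝔽 j) :=
  Polynomial.mapRingHom (Pi.evalRingHom 𝔽 j)

lemma pij_combine (g : ∀ j, Polynomial (𝔽 j)) (j : Fin t) :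
    pij 𝔽 j (combine g) = g j := map_combine g j

lemma map_mulVec_poly {α β : Type*} [CommRing α] [CommRing β] (f : α →+* β)
    {a b : ℕ} (M : Matrix (Fin a) (Fin b) α) (x : Fin b → α) (i : Fin a) :
    f (M.mulVec x i) = (M.map f).mulVec (fun c => f (x c)) i := by
  simp [Matrix.mulVec, dotProduct, map_sum, Matrix.map_apply]

lemma pij_matC {a b : ℕ} (M : Matrix (Fin a) (Fin b) (∀ j, 𝔽 j)) (j : Fin t) :
    (M.map Polynomial.C).map (pij 𝔽 j)
      = (M.map (Pi.evalRingHom 𝔽 j)).map Polynomial.C := by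
  funext i' c'
  show (Polynomial.C (M i' c')).map (Pi.evalRingHom 𝔽 j) = Polynomial.C (M i' c' j)
  rw [Polynomial.map_C]
  rfl

lemma pij_mulVec {a b : ℕ} (M : Matrix (Fin a) (Fin b) (∀ j, 𝔽 j))
    (x : Fin b → Polynomial (∀ j, 𝔽 j)) (j : Fin t) (i : Fin a) :
    pij 𝔽 j ((M.map Polynomial.C).mulVec x i)
      = ((M.map (Pi.evalRingHom 𝔽 j)).map Polynomial.C).mulVec
          (fun c => pij 𝔽 j (x c)) i := by
  rw [map_mulVec_poly (pij 𝔽 j), pij_matC]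

lemma pij_X (j : Fin t) : pij 𝔽 j (X : Polynomial (∀ j, 𝔽 j)) = X :=
  Polynomial.map_X _

lemma mem_code_iff
    (A : Matrix (Fin δ) (Fin δ) (∀ j, 𝔽 j)) (B : Matrix (Fin δ) (Fin k) (∀ j, 𝔽 j))
    (C : Matrix (Fin m) (Fin δ) (∀ j, 𝔽 j)) (D : Matrix (Fin m) (Fin k) (∀ j, 𝔽 j))
    (v : (Fin m ⊕ Fin k) → Polynomial (∀ j, 𝔽 j)) :
    v ∈ codeSet A B C D ↔
      ∀ j, (fun i => pij 𝔽 j (v i)) ∈ codeSet (A.map (Pi.evalRingHom 𝔽 j))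
        (B.map (Pi.evalRingHom 𝔽 j)) (C.map (Pi.evalRingHom 𝔽 j))
        (D.map (Pi.evalRingHom 𝔽 j)) := by
  constructor
  · rintro ⟨x, h1, h2⟩ j
    refine ⟨fun c => pij 𝔽 j (x c), ?_, ?_⟩
    · funext c
      show X * pij 𝔽 j (x c) = _
      rw [← pij_X (𝔽 := 𝔽) j, ← _root_.map_mul]
      rw [show X * x c = ((A.map Polynomial.C).mulVec x
        + (B.map Polynomial.C).mulVec fun i => v (Sum.inr i)) c from congrFun h1 c]
      show pij 𝔽 j ((A.map Polynomial.C).mulVec x c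
        + (B.map Polynomial.C).mulVec (fun i => v (Sum.inr i)) c) = _
      rw [_root_.map_add, pij_mulVec, pij_mulVec]
      rfl
    · funext i
      show pij 𝔽 j (v (Sum.inl i)) = _
      rw [show v (Sum.inl i) = ((C.map Polynomial.C).mulVec x
        + (D.map Polynomial.C).mulVec fun i => v (Sum.inr i)) i from congrFun h2 i]
      show pij 𝔽 j ((C.map Polynomial.C).mulVec x i
        + (D.map Polynomial.C).mulVec (fun i => v (Sum.inr i)) i) = _
      rw [_root_.map_add, pij_mulVec, pij_mulVec]
      rfl
  · intro h
    choose xs h1 h2 using h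
    have h1' : ∀ j, (X : Polynomial (𝔽 j)) • xs j
        = ((A.map (Pi.evalRingHom 𝔽 j)).map Polynomial.C).mulVec (xs j)
          + ((B.map (Pi.evalRingHom 𝔽 j)).map Polynomial.C).mulVec
              (fun i => pij 𝔽 j (v (Sum.inr i))) := fun j => h1 j
    have h2' : ∀ j, (fun i => pij 𝔽 j (v (Sum.inl i)))
        = ((C.map (Pi.evalRingHom 𝔽 j)).map Polynomial.C).mulVec (xs j)
          + ((D.map (Pi.evalRingHom 𝔽 j)).map Polynomial.C).mulVec
              (fun i => pij 𝔽 j (v (Sum.inr i))) := fun j => h2 j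
    set x : Fin δ → Polynomial (∀ j, 𝔽 j) := fun c => combine fun j => xs j c with hxdef
    have hxj : ∀ (j : Fin t) (c : Fin δ), pij 𝔽 j (x c) = xs j c :=
      fun j c => pij_combine _ j
    have hxfun : ∀ j : Fin t, (fun c => pij 𝔽 j (x c)) = xs j :=
      fun j => funext fun c => hxj j c
    refine ⟨x, ?_, ?_⟩
    · funext c
      refine pi_map_injective fun j => ?_
      show pij 𝔽 j (((X : Polynomial (∀ j, 𝔽 j)) • x) c) = pij 𝔽 j (((A.map Polynomial.C).mulVec x
        + (B.map Polynomial.C).mulVec fun i => v (Sum.inr i)) c)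
      have e1 : pij 𝔽 j (((X : Polynomial (∀ j, 𝔽 j)) • x) c) = ((X : Polynomial (𝔽 j)) • xs j) c := by
        show pij 𝔽 j (X * x c) = X * xs j c
        rw [_root_.map_mul, pij_X, hxj]
      rw [e1, congrFun (h1' j) c]
      show _ = pij 𝔽 j ((A.map Polynomial.C).mulVec x c
        + (B.map Polynomial.C).mulVec (fun i => v (Sum.inr i)) c)
      rw [_root_.map_add, pij_mulVec, pij_mulVec, hxfun]
      rfl
    · funext i
      refine pi_map_injective fun j => ?_
      show pij 𝔽 j (v (Sum.inl i)) = pij 𝔽 j (((C.map Polynomial.C).mulVec x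
        + (D.map Polynomial.C).mulVec fun i => v (Sum.inr i)) i)
      rw [congrFun (h2' j) i]
      show _ = pij 𝔽 j ((C.map Polynomial.C).mulVec x i
        + (D.map Polynomial.C).mulVec (fun i => v (Sum.inr i)) i)
      rw [_root_.map_add, pij_mulVec, pij_mulVec, hxfun]
      rfl

end PiCode

set_option maxHeartbeats 2000000 in
theorem code_of_ISO_observable {t n k δ : ℕ} (hk : k ≤ n)
    (𝔽 : Fin t → Type*) [∀ j, Field (𝔽 j)] [∀ j, Fintype (𝔽 j)]
    (A : Matrix (Fin δ) (Fin δ) (∀ j, 𝔽 j))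
    (B : Matrix (Fin δ) (Fin k) (∀ j, 𝔽 j))
    (C : Matrix (Fin (n - k)) (Fin δ) (∀ j, 𝔽 j))
    (D : Matrix (Fin (n - k)) (Fin k) (∀ j, 𝔽 j))
    (hreach : Function.Surjective (ctrbMatrix A B).mulVecLin)
    (hobs : Function.Injective (obsvMatrix A C).mulVecLin) :
    Module.Flat (Polynomial (∀ j, 𝔽 j))
      (((Fin (n - k) ⊕ Fin k) → Polynomial (∀ j, 𝔽 j)) ⧸
        Submodule.span (Polynomial (∀ j, 𝔽 j))
          {v : (Fin (n - k) ⊕ Fin k) → Polynomial (∀ j, 𝔽 j) |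
            ∃ x : Fin δ → Polynomial (∀ j, 𝔽 j),
              (Polynomial.X : Polynomial (∀ j, 𝔽 j)) • x =
                  (A.map Polynomial.C).mulVec x
                    + (B.map Polynomial.C).mulVec (fun i => v (Sum.inr i)) ∧
              (fun i => v (Sum.inl i)) =
                  (C.map Polynomial.C).mulVec x
                    + (D.map Polynomial.C).mulVec (fun i => v (Sum.inr i))}) := by
  classical
  have hspan : Submodule.span (Polynomial (∀ j, 𝔽 j))
      {v : (Fin (n - k) ⊕ Fin k) → Polynomial (∀ j, 𝔽 j) |
        ∃ x : Fin δ → Polynomial (∀ j, 𝔽 j),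
          (Polynomial.X : Polynomial (∀ j, 𝔽 j)) • x =
              (A.map Polynomial.C).mulVec x
                + (B.map Polynomial.C).mulVec (fun i => v (Sum.inr i)) ∧
          (fun i => v (Sum.inl i)) =
              (C.map Polynomial.C).mulVec x
                + (D.map Polynomial.C).mulVec (fun i => v (Sum.inr i))}
      = codeSubmodule A B C D := Submodule.span_eq (codeSubmodule A B C D)
  rw [hspan]
  -- componentwise observability
  have hobsj : ∀ j, Function.Injective (obsvMatrix (A.map (Pi.evalRingHom 𝔽 j))
      (C.map (Pi.evalRingHom 𝔽 j))).mulVecLin := by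
    intro j
    have hker0 : ∀ xj : Fin δ → 𝔽 j,
        (obsvMatrix (A.map (Pi.evalRingHom 𝔽 j)) (C.map (Pi.evalRingHom 𝔽 j))).mulVec xj = 0
          → xj = 0 := by
      intro xj hxj
      have hmul : (obsvMatrix A C).mulVec
          (fun c => Pi.single (M := fun j => 𝔽 j) j (xj c)) = 0 := by
        funext p
        funext j'
        have e0 : (obsvMatrix A C).mulVec (fun c => Pi.single (M := fun j => 𝔽 j) j (xj c)) p j'
            = ∑ c, obsvMatrix A C p c j' * (Pi.single (M := fun j => 𝔽 j) j (xj c) j') := by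
          show (∑ c, obsvMatrix A C p c * Pi.single (M := fun j => 𝔽 j) j (xj c)) j' = _
          rw [Finset.sum_apply]
          rfl
        rw [e0]
        by_cases hj : j' = j
        · subst hj
          have e1 : ∀ c, obsvMatrix A C p c j'
              * (Pi.single (M := fun j => 𝔽 j) j' (xj c) j')
              = obsvMatrix (A.map (Pi.evalRingHom 𝔽 j'))
                  (C.map (Pi.evalRingHom 𝔽 j')) p c * xj c := by
            intro c
            rw [Pi.single_eq_same, obsvMatrix_map]
            rfl
          rw [Finset.sum_congr rfl fun c _ => e1 c]
          have e2 : (∑ c, obsvMatrix (A.map (Pi.evalRingHom 𝔽 j'))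
              (C.map (Pi.evalRingHom 𝔽 j')) p c * xj c)
              = (obsvMatrix (A.map (Pi.evalRingHom 𝔽 j'))
                  (C.map (Pi.evalRingHom 𝔽 j'))).mulVec xj p := rfl
          rw [e2, hxj]
          rfl
        · have : ∀ c, obsvMatrix A C p c j'
              * (Pi.single (M := fun j => 𝔽 j) j (xj c) j') = 0 := by
            intro c
            rw [Pi.single_eq_of_ne hj, mul_zero]
          rw [Finset.sum_congr rfl fun c _ => this c, Finset.sum_const_zero]
          rfl
      have h0 : (fun c => Pi.single (M := fun j => 𝔽 j) j (xj c)) = 0 := by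
        apply hobs
        rw [map_zero, Matrix.mulVecLin_apply]
        exact hmul
      funext c
      have := congrFun h0 c
      calc xj c = Pi.single (M := fun j => 𝔽 j) j (xj c) j := (Pi.single_eq_same _ _).symm
      _ = 0 := by rw [this]; rfl
    intro a b hab
    have h1 : (obsvMatrix (A.map (Pi.evalRingHom 𝔽 j))
        (C.map (Pi.evalRingHom 𝔽 j))).mulVecLin (a - b) = 0 := by
      rw [map_sub, hab, sub_self]
    have h2 := hker0 (a - b) (by rw [← Matrix.mulVecLin_apply]; exact h1)
    exact sub_eq_zero.mp h2
  -- algebra structure on each component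
  letI algInst : ∀ j, Algebra (Polynomial (∀ j, 𝔽 j)) (Polynomial (𝔽 j)) :=
    fun j => (pij 𝔽 j).toAlgebra
  haveI hFlatSj : ∀ j, Module.Flat (Polynomial (∀ j, 𝔽 j)) (Polynomial (𝔽 j)) := by
    intro j
    let ι : Polynomial (𝔽 j) →ₗ[Polynomial (∀ j, 𝔽 j)] Polynomial (∀ j, 𝔽 j) :=
      { toFun := fun p => combine (Pi.single j p)
        map_add' := fun p p' => pi_map_injective fun j' => by
          rw [Polynomial.map_add, map_combine, map_combine, map_combine, Pi.single_add]
          rfl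
        map_smul' := fun s p => pi_map_injective fun j' => by
          show (combine (Pi.single j (s • p))).map (Pi.evalRingHom 𝔽 j')
            = (s * combine (Pi.single j p)).map (Pi.evalRingHom 𝔽 j')
          rw [map_combine, Polynomial.map_mul, map_combine]
          by_cases hj : j' = j
          · subst hj
            rw [Pi.single_eq_same, Pi.single_eq_same, Algebra.smul_def,
              RingHom.algebraMap_toAlgebra]
            rfl
          · rw [Pi.single_eq_of_ne hj, Pi.single_eq_of_ne hj, mul_zero]
      }
    refine Module.Flat.of_retract ι (Algebra.linearMap _ _) ?_
    apply LinearMap.ext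
    intro p
    show algebraMap (Polynomial (∀ j, 𝔽 j)) (Polynomial (𝔽 j)) (combine (Pi.single j p)) = p
    rw [RingHom.algebraMap_toAlgebra, pij_combine, Pi.single_eq_same]
  -- component quotients
  haveI hFlatNj : ∀ j, Module.Flat (Polynomial (𝔽 j))
      (((Fin (n - k) ⊕ Fin k) → Polynomial (𝔽 j)) ⧸
        codeSubmodule (A.map (Pi.evalRingHom 𝔽 j)) (B.map (Pi.evalRingHom 𝔽 j))
          (C.map (Pi.evalRingHom 𝔽 j)) (D.map (Pi.evalRingHom 𝔽 j))) :=
    fun j => flat_quotient_code _ _ _ _ (hobsj j)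
  let N : Fin t → Type _ := fun j => RestrictScalars (Polynomial (∀ j, 𝔽 j)) (Polynomial (𝔽 j))
      (((Fin (n - k) ⊕ Fin k) → Polynomial (𝔽 j)) ⧸
        codeSubmodule (A.map (Pi.evalRingHom 𝔽 j)) (B.map (Pi.evalRingHom 𝔽 j))
          (C.map (Pi.evalRingHom 𝔽 j)) (D.map (Pi.evalRingHom 𝔽 j)))
  letI modOrig : ∀ j, Module (Polynomial (𝔽 j)) (N j) :=
    fun j => RestrictScalars.moduleOrig _ _ _
  haveI hFlatNj' : ∀ j, Module.Flat (Polynomial (𝔽 j)) (N j) := fun j => hFlatNj j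
  haveI hFlatN : ∀ j, Module.Flat (Polynomial (∀ j, 𝔽 j)) (N j) :=
    fun j => Module.Flat.trans (Polynomial (∀ j, 𝔽 j)) (Polynomial (𝔽 j)) (N j)
  haveI hPiFlat : Module.Flat (Polynomial (∀ j, 𝔽 j)) (∀ j, N j) :=
    Module.Flat.of_linearEquiv
      (DirectSum.linearEquivFunOnFintype (Polynomial (∀ j, 𝔽 j)) (Fin t) N).symm
  -- the comparison map
  let f : ((Fin (n - k) ⊕ Fin k) → Polynomial (∀ j, 𝔽 j)) →ₗ[Polynomial (∀ j, 𝔽 j)] ∀ j, N j :=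
    { toFun := fun v j => (Submodule.Quotient.mk (fun i => pij 𝔽 j (v i)) :
        ((Fin (n - k) ⊕ Fin k) → Polynomial (𝔽 j)) ⧸
          codeSubmodule (A.map (Pi.evalRingHom 𝔽 j)) (B.map (Pi.evalRingHom 𝔽 j))
            (C.map (Pi.evalRingHom 𝔽 j)) (D.map (Pi.evalRingHom 𝔽 j)))
      map_add' := fun v w => funext fun j => by
        show Submodule.Quotient.mk _ = (Submodule.Quotient.mk _ + Submodule.Quotient.mk _ :
          ((Fin (n - k) ⊕ Fin k) → Polynomial (𝔽 j)) ⧸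
            codeSubmodule (A.map (Pi.evalRingHom 𝔽 j)) (B.map (Pi.evalRingHom 𝔽 j))
              (C.map (Pi.evalRingHom 𝔽 j)) (D.map (Pi.evalRingHom 𝔽 j)))
        rw [← Submodule.Quotient.mk_add]
        congr 1
        funext i
        exact map_add (pij 𝔽 j) (v i) (w i)
      map_smul' := fun s v => funext fun j => by
        show Submodule.Quotient.mk _ = ((pij 𝔽 j s) • Submodule.Quotient.mk _ :
          ((Fin (n - k) ⊕ Fin k) → Polynomial (𝔽 j)) ⧸
            codeSubmodule (A.map (Pi.evalRingHom 𝔽 j)) (B.map (Pi.evalRingHom 𝔽 j))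
              (C.map (Pi.evalRingHom 𝔽 j)) (D.map (Pi.evalRingHom 𝔽 j)))
        rw [← Submodule.Quotient.mk_smul]
        congr 1
        funext i
        exact map_mul (pij 𝔽 j) s (v i)
    }
  have hker : LinearMap.ker f = codeSubmodule A B C D := by
    ext v
    rw [LinearMap.mem_ker, mem_codeSubmodule, mem_code_iff A B C D v]
    constructor
    · intro h j
      have hj : (Submodule.Quotient.mk (fun i => pij 𝔽 j (v i)) :
          ((Fin (n - k) ⊕ Fin k) → Polynomial (𝔽 j)) ⧸
            codeSubmodule (A.map (Pi.evalRingHom 𝔽 j)) (B.map (Pi.evalRingHom 𝔽 j))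
              (C.map (Pi.evalRingHom 𝔽 j)) (D.map (Pi.evalRingHom 𝔽 j))) = 0 := congrFun h j
      rw [Submodule.Quotient.mk_eq_zero] at hj
      exact hj
    · intro h
      funext j
      show (Submodule.Quotient.mk (fun i => pij 𝔽 j (v i)) :
          ((Fin (n - k) ⊕ Fin k) → Polynomial (𝔽 j)) ⧸
            codeSubmodule (A.map (Pi.evalRingHom 𝔽 j)) (B.map (Pi.evalRingHom 𝔽 j))
              (C.map (Pi.evalRingHom 𝔽 j)) (D.map (Pi.evalRingHom 𝔽 j))) = 0
      rw [Submodule.Quotient.mk_eq_zero]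
      exact h j
  have hsurj : Function.Surjective f := by
    intro mvec
    have hrep : ∀ j, ∃ g : (Fin (n - k) ⊕ Fin k) → Polynomial (𝔽 j),
        (Submodule.Quotient.mk g :
          ((Fin (n - k) ⊕ Fin k) → Polynomial (𝔽 j)) ⧸
            codeSubmodule (A.map (Pi.evalRingHom 𝔽 j)) (B.map (Pi.evalRingHom 𝔽 j))
              (C.map (Pi.evalRingHom 𝔽 j)) (D.map (Pi.evalRingHom 𝔽 j))) = mvec j :=
      fun j => Submodule.Quotient.mk_surjective _ (mvec j)
    choose g hg using hrep
    refine ⟨fun i => combine (fun j => g j i), ?_⟩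
    funext j
    show (Submodule.Quotient.mk (fun i => pij 𝔽 j (combine fun j' => g j' i)) :
        ((Fin (n - k) ⊕ Fin k) → Polynomial (𝔽 j)) ⧸
          codeSubmodule (A.map (Pi.evalRingHom 𝔽 j)) (B.map (Pi.evalRingHom 𝔽 j))
            (C.map (Pi.evalRingHom 𝔽 j)) (D.map (Pi.evalRingHom 𝔽 j))) = mvec j
    rw [show (fun i => pij 𝔽 j (combine fun j' => g j' i)) = g j from
      funext fun i => pij_combine _ j]
    exact hg j
  exact Module.Flat.of_linearEquiv
    ((Submodule.quotEquivOfEq _ _ hker.symm).trans (f.quotKerEquivOfSurjective hsurj))
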